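/- arXiv:2409.11903 — 2 statements merged into one kernel-verified Lean document; each statement's English description precedes it below -/
import Mathlib

section
/- Let B¹¹ ∈ ℝ^{m×m}, ů ∈ L^1(0,1; ℝ^m), λ ∈ ℂ with Re λ > log‖B¹¹‖. Define u(x,t) := (B¹¹)^n ů(n−t+x) for 0 < n−t+x < 1 (n ∈ ℕ∪{0}), extended suitably. Then for x ∈ (0,1): ∫₀^∞ e^{−λt} u(x,t) dt = ∫₀^x e^{−λ(x−s)} ů(s) ds + e^{−λx} ∑_{n=0}^∞ (B¹¹)^{n+1} e^{−λn} ∫₀^1 e^{−λ(1−s)} ů(s) ds, where the series converges absolutely. -/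
open Matrix MeasureTheory Set
attribute [local instance] Matrix.linftyOpNormedRing

namespace LaplaceAux

noncomputable def cL (m : ℕ) : (Fin m → ℝ) →L[ℝ] (Fin m → ℂ) :=
  ContinuousLinearMap.pi fun i => Complex.ofRealCLM.comp (ContinuousLinearMap.proj i)

lemma cL_apply (m : ℕ) (v : Fin m → ℝ) : cL m v = fun i => ((v i : ℝ) : ℂ) := rfl

lemma map_mulVec {m : ℕ} (A : Matrix (Fin m) (Fin m) ℝ) (v : Fin m → ℝ) :
    (A.map (Complex.ofReal ·)) *ᵥ (fun i => ((v i : ℝ) : ℂ)) = fun i => (((A *ᵥ v) i : ℝ) : ℂ) := by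
  funext i
  simp [Matrix.mulVec, dotProduct, Matrix.map_apply]

lemma nnnorm_map_ofReal {m : ℕ} (A : Matrix (Fin m) (Fin m) ℝ) :
    ‖A.map (Complex.ofReal ·)‖₊ = ‖A‖₊ := by
  rw [Matrix.linfty_opNNNorm_def, Matrix.linfty_opNNNorm_def]
  simp [Matrix.map_apply]

lemma norm_mapped_mulVec_le {m : ℕ} (A : Matrix (Fin m) (Fin m) ℝ) (w : Fin m → ℂ) :
    ‖(A.map (Complex.ofReal ·)) *ᵥ w‖ ≤ ‖A‖ * ‖w‖ := by
  calc ‖(A.map (Complex.ofReal ·)) *ᵥ w‖ ≤ ‖A.map (Complex.ofReal ·)‖ * ‖w‖ :=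
        Matrix.linfty_opNorm_mulVec _ _
    _ = ‖A‖ * ‖w‖ := by
        rw [show ‖A.map (Complex.ofReal ·)‖ = ‖A‖ from congrArg NNReal.toReal (nnnorm_map_ofReal A)]

lemma norm_exp_neg_mul (lam : ℂ) (t : ℝ) : ‖Complex.exp (-lam * t)‖ = Real.exp (-lam.re * t) := by
  rw [Complex.norm_exp]
  congr 1
  simp [Complex.mul_re]

end LaplaceAux

theorem laplace_transform_u_free_part (m : ℕ) (B11 : Matrix (Fin m) (Fin m) ℝ)
    (u0 : ℝ → Fin m → ℝ) (hu0 : MeasureTheory.IntegrableOn u0 (Set.Ioo 0 1))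
    (lam : ℂ) (hlam : Real.log ‖B11‖ < lam.re)
    (u : ℝ → ℝ → Fin m → ℝ)
    (hu : ∀ (x t : ℝ) (n : ℕ), 0 < (n : ℝ) - t + x → (n : ℝ) - t + x < 1 →
      u x t = (B11 ^ n) *ᵥ u0 ((n : ℝ) - t + x))
    (x : ℝ) (hx : x ∈ Set.Ioo (0 : ℝ) 1) :
    (Summable fun n : ℕ =>
      ‖Complex.exp (-lam * n) •
        (((B11 ^ (n + 1)).map (Complex.ofReal ·)) *ᵥ
          (∫ s in (0 : ℝ)..1, Complex.exp (-lam * (1 - s)) • (fun i => ((u0 s i : ℝ) : ℂ))))‖) ∧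
    (∫ t in Set.Ioi (0 : ℝ), Complex.exp (-lam * t) • (fun i => ((u x t i : ℝ) : ℂ)))
      = (∫ s in (0 : ℝ)..x, Complex.exp (-lam * (x - s)) • (fun i => ((u0 s i : ℝ) : ℂ)))
        + Complex.exp (-lam * x) •
          ∑' n : ℕ, Complex.exp (-lam * n) •
            (((B11 ^ (n + 1)).map (Complex.ofReal ·)) *ᵥ
              (∫ s in (0 : ℝ)..1, Complex.exp (-lam * (1 - s)) • (fun i => ((u0 s i : ℝ) : ℂ)))) := by
  classical
  obtain ⟨hx0, hx1⟩ := hx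
  -- complexified data
  set v0 : ℝ → Fin m → ℂ := fun s i => ((u0 s i : ℝ) : ℂ) with hv0def
  have hv0s : ∀ s : ℝ, (fun i => ((u0 s i : ℝ) : ℂ)) = v0 s := fun _ => rfl
  have hv0 : IntegrableOn v0 (Ioo 0 1) := (LaplaceAux.cL m).integrable_comp hu0
  simp only [hv0s]
  set F : ℝ → Fin m → ℂ := fun t => Complex.exp (-lam * t) • (fun i => ((u x t i : ℝ) : ℂ))
    with hFdef
  -- geometric quantities
  set r : ℝ := Real.exp (-lam.re) with hrdef
  have hr0 : (0 : ℝ) < r := Real.exp_pos _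
  set rho : ℝ := ‖B11‖ * r with hrhodef
  have hrho0 : (0 : ℝ) ≤ rho := mul_nonneg (norm_nonneg _) hr0.le
  have hrho1 : rho < 1 := by
    rcases eq_or_lt_of_le (norm_nonneg B11) with h | h
    · rw [hrhodef, ← h, zero_mul]; norm_num
    · have hBlt : ‖B11‖ < Real.exp lam.re := by
        rw [← Real.exp_log h]
        exact Real.exp_lt_exp.mpr hlam
      rw [hrhodef, hrdef, Real.exp_neg, ← div_eq_mul_inv]
      exact (div_lt_one (Real.exp_pos _)).mpr hBlt
  have hgeo : Summable (fun n : ℕ => rho ^ n) := summable_geometric_of_lt_one hrho0 hrho1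
  have hrn : ∀ n : ℕ, ‖Complex.exp (-lam * n)‖ = r ^ n := by
    intro n
    rw [show ((n : ℂ)) = ((n : ℝ) : ℂ) by push_cast; ring, LaplaceAux.norm_exp_neg_mul,
      show -lam.re * (n : ℝ) = (n : ℝ) * -lam.re from mul_comm _ _, Real.exp_nat_mul, hrdef]
  have hsum0 : Summable (fun n : ℕ => ‖B11 ^ n‖ * r ^ n) := by
    rw [← summable_nat_add_iff 1]
    refine Summable.of_nonneg_of_le
      (fun n => mul_nonneg (norm_nonneg _) (pow_nonneg hr0.le _))
      (fun n => ?_) (hgeo.mul_left rho)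
    calc ‖B11 ^ (n + 1)‖ * r ^ (n + 1) ≤ ‖B11‖ ^ (n + 1) * r ^ (n + 1) :=
          mul_le_mul_of_nonneg_right (norm_pow_le' B11 (Nat.succ_pos n)) (pow_nonneg hr0.le _)
      _ = rho * rho ^ n := by rw [← mul_pow, ← hrhodef, pow_succ, mul_comm]
  -- the constant vector J
  set J : Fin m → ℂ := ∫ s in (0 : ℝ)..1, Complex.exp (-lam * (1 - s)) • v0 s with hJdef
  -- first conjunct : summability
  have hnormT : ∀ n : ℕ,
      ‖Complex.exp (-lam * n) • (((B11 ^ (n + 1)).map (Complex.ofReal ·)) *ᵥ J)‖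
        ≤ (‖B11‖ * ‖J‖) * rho ^ n := by
    intro n
    rw [norm_smul, hrn]
    calc r ^ n * ‖((B11 ^ (n + 1)).map (Complex.ofReal ·)) *ᵥ J‖
        ≤ r ^ n * (‖B11 ^ (n + 1)‖ * ‖J‖) := by
          exact mul_le_mul_of_nonneg_left (LaplaceAux.norm_mapped_mulVec_le _ _)
            (pow_nonneg hr0.le _)
      _ ≤ r ^ n * (‖B11‖ ^ (n + 1) * ‖J‖) := by
          refine mul_le_mul_of_nonneg_left (mul_le_mul_of_nonneg_right ?_ (norm_nonneg _))
            (pow_nonneg hr0.le _)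
          exact norm_pow_le' B11 (Nat.succ_pos n)
      _ = (‖B11‖ * ‖J‖) * rho ^ n := by rw [hrhodef]; ring
  have hsummable : Summable fun n : ℕ =>
      ‖Complex.exp (-lam * n) • (((B11 ^ (n + 1)).map (Complex.ofReal ·)) *ᵥ J)‖ :=
    Summable.of_nonneg_of_le (fun n => norm_nonneg _) hnormT (hgeo.mul_left _)
  refine ⟨hsummable, ?_⟩
  -- the decomposition of (0,∞) into intervals
  set a : ℕ → ℝ := fun n => max ((n : ℝ) - 1 + x) 0 with hadef
  set A : ℕ → Set ℝ := fun n => Ioo (a n) ((n : ℝ) + x) with hAdef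
  have ha_lb : ∀ n : ℕ, (n : ℝ) - 1 + x ≤ a n := fun n => le_max_left _ _
  have ha_nonneg : ∀ n : ℕ, 0 ≤ a n := fun n => le_max_right _ _
  have ha_lt : ∀ n : ℕ, a n < (n : ℝ) + x := by
    intro n
    apply max_lt (by linarith) (by positivity)
  have hA0 : A 0 = Ioo 0 x := by
    rw [hAdef]
    simp only [hadef, Nat.cast_zero]
    rw [max_eq_right (by linarith), zero_add]
  have hAn : ∀ n : ℕ, A (n + 1) = Ioo ((n : ℝ) + x) ((n : ℝ) + 1 + x) := by
    intro n
    rw [hAdef]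
    simp only [hadef, Nat.cast_add, Nat.cast_one]
    rw [show ((n : ℝ) + 1 - 1 + x) = (n : ℝ) + x by ring,
      max_eq_left (by positivity), show ((n : ℝ) + 1 + x) = (n : ℝ) + 1 + x by ring]
  have hmeasA : ∀ n : ℕ, MeasurableSet (A n) := fun n => measurableSet_Ioo
  have hdisj : Pairwise (Function.onFun Disjoint A) := by
    have key : ∀ i j : ℕ, i < j → Disjoint (A i) (A j) := by
      intro i j hij
      rw [hAdef, Set.Ioo_disjoint_Ioo]
      refine le_trans (min_le_left _ _) (le_trans ?_ (le_max_right _ _))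
      refine le_trans ?_ (ha_lb j)
      have : (i : ℝ) + 1 ≤ (j : ℝ) := by exact_mod_cast hij
      linarith
    intro i j hij
    rcases hij.lt_or_gt with h | h
    · exact key i j h
    · exact (key j i h).symm
  have hUsub : (⋃ n, A n) ⊆ Ioi 0 := by
    intro t ht
    rcases Set.mem_iUnion.mp ht with ⟨n, hn⟩
    exact lt_of_le_of_lt (ha_nonneg n) hn.1
  have hcover : Ioi (0 : ℝ) \ (⋃ n, A n) ⊆ Set.range (fun n : ℕ => (n : ℝ) + x) := by
    rintro t ⟨ht0, htU⟩
    by_cases h : t < x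
    · exfalso
      exact htU (Set.mem_iUnion.mpr ⟨0, by rw [hA0]; exact ⟨ht0, h⟩⟩)
    · push_neg at h
      set n : ℕ := ⌊t - x⌋₊ with hndef
      have hn1 : (n : ℝ) ≤ t - x := Nat.floor_le (by linarith)
      have hn2 : t - x < (n : ℝ) + 1 := Nat.lt_floor_add_one _
      rcases eq_or_lt_of_le hn1 with heq | hlt
      · exact ⟨n, show (n : ℝ) + x = t by linarith⟩
      · exfalso
        refine htU (Set.mem_iUnion.mpr ⟨n + 1, ?_⟩)
        rw [hAn n]
        exact ⟨by linarith, by linarith⟩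
  have haeU : Ioi (0 : ℝ) =ᵐ[volume] ⋃ n, A n := by
    rw [MeasureTheory.ae_eq_set]
    constructor
    · exact measure_mono_null hcover ((Set.countable_range _).measure_zero _)
    · rw [Set.diff_eq_empty.mpr hUsub]
      exact measure_empty
  -- measurable representative of v0
  have hv0m := hv0.aestronglyMeasurable
  set g : ℝ → Fin m → ℂ := hv0m.mk v0 with hgdef
  have hgsm : StronglyMeasurable g := hv0m.stronglyMeasurable_mk
  have hgae : v0 =ᵐ[volume.restrict (Ioo 0 1)] g := hv0m.ae_eq_mk
  have hgint : IntegrableOn g (Ioo 0 1) := hv0.congr hgae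
  have hDnull : volume ({s : ℝ | v0 s ≠ g s} ∩ Ioo 0 1) = 0 := by
    have h := hgae
    rw [Filter.EventuallyEq, ae_iff, Measure.restrict_apply' measurableSet_Ioo] at h
    exact h
  set M : ℕ → Matrix (Fin m) (Fin m) ℂ := fun n => (B11 ^ n).map (Complex.ofReal ·) with hMdef
  set G : ℕ → ℝ → Fin m → ℂ :=
    fun n t => Complex.exp (-lam * t) • (M n *ᵥ v0 ((n : ℝ) + x - t)) with hGdef
  set G' : ℕ → ℝ → Fin m → ℂ :=
    fun n t => Complex.exp (-lam * t) • (M n *ᵥ g ((n : ℝ) + x - t)) with hG'def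
  have hFG : ∀ n : ℕ, ∀ t ∈ A n, F t = G n t := by
    intro n t ht
    obtain ⟨ht1, ht2⟩ := ht
    have h1 : 0 < (n : ℝ) - t + x := by linarith [ht2]
    have h2 : (n : ℝ) - t + x < 1 := by
      have hlb := ha_lb n
      have : (n : ℝ) - 1 + x < t := lt_of_le_of_lt hlb ht1
      linarith
    have hut := hu x t n h1 h2
    show Complex.exp (-lam * t) • (fun i => ((u x t i : ℝ) : ℂ))
      = Complex.exp (-lam * t) • (M n *ᵥ v0 ((n : ℝ) + x - t))
    rw [show (n : ℝ) + x - t = (n : ℝ) - t + x by ring]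
    show _ = Complex.exp (-lam * t) •
      (((B11 ^ n).map (Complex.ofReal ·)) *ᵥ (fun i => ((u0 ((n : ℝ) - t + x) i : ℝ) : ℂ)))
    rw [LaplaceAux.map_mulVec]
    simp only [hut]
  -- the uniform constant
  set C0 : ℝ := ∫ s in Ioo (0 : ℝ) 1, ‖g s‖ with hC0def
  have hC0nonneg : 0 ≤ C0 := integral_nonneg fun s => norm_nonneg _
  have key : ∀ n : ℕ, IntegrableOn F (A n) ∧
      (∫ t in A n, ‖F t‖) ≤ Real.exp |lam.re| * (‖B11 ^ n‖ * r ^ n) * C0 := by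
    intro n
    have hsub1 : A n ⊆ Ioo ((n : ℝ) + x - 1) ((n : ℝ) + x) := by
      intro t ht
      refine ⟨lt_of_le_of_lt ?_ ht.1, ht.2⟩
      have := ha_lb n; linarith
    have hemb : MeasurableEmbedding (fun t : ℝ => (n : ℝ) + x - t) :=
      (MeasurableEquiv.subLeft ((n : ℝ) + x)).measurableEmbedding
    have hmp : MeasurePreserving (fun t : ℝ => (n : ℝ) + x - t) volume volume :=
      Measure.measurePreserving_sub_left volume _
    have hpre : (fun t : ℝ => (n : ℝ) + x - t) ⁻¹' (Ioo 0 1)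
        = Ioo ((n : ℝ) + x - 1) ((n : ℝ) + x) := by
      rw [Set.preimage_const_sub_Ioo]
      norm_num
    have hmpr : MeasurePreserving (fun t : ℝ => (n : ℝ) + x - t)
        (volume.restrict (Ioo ((n : ℝ) + x - 1) ((n : ℝ) + x)))
        (volume.restrict (Ioo 0 1)) := by
      have := hmp.restrict_preimage (μa := volume) (measurableSet_Ioo (a := (0 : ℝ)) (b := 1))
      rwa [hpre] at this
    have hgcomp : IntegrableOn (fun t => g ((n : ℝ) + x - t))
        (Ioo ((n : ℝ) + x - 1) ((n : ℝ) + x)) :=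
      (hmpr.integrable_comp_emb hemb).2 hgint
    have hgcompA : IntegrableOn (fun t => g ((n : ℝ) + x - t)) (A n) := hgcomp.mono_set hsub1
    have hLcont : Continuous fun w : Fin m → ℂ => M n *ᵥ w :=
      (LinearMap.toContinuousLinearMap (Matrix.mulVecLin (M n))).continuous
    have hsmG' : StronglyMeasurable (G' n) := by
      apply StronglyMeasurable.smul (f := fun t : ℝ => Complex.exp (-lam * t))
        (g := fun t => M n *ᵥ g ((n : ℝ) + x - t))
      · exact (Complex.continuous_exp.comp
          ((continuous_const (y := -lam)).mul Complex.continuous_ofReal)).stronglyMeasurable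
      · exact hLcont.comp_stronglyMeasurable
          (hgsm.comp_measurable (measurable_const.sub measurable_id))
    have haeFG' : F =ᵐ[volume.restrict (A n)] G' n := by
      rw [Filter.EventuallyEq, ae_restrict_iff' (hmeasA n)]
      rw [ae_iff]
      have hnull2 : volume ((fun t : ℝ => (n : ℝ) + x - t) ⁻¹'
          ({s : ℝ | v0 s ≠ g s} ∩ Ioo 0 1)) = 0 := by
        rw [hmp.measure_preimage (NullMeasurableSet.of_null hDnull)]
        exact hDnull
      refine measure_mono_null ?_ hnull2
      intro t ht
      simp only [Set.mem_setOf_eq, _root_.not_imp] at ht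
      obtain ⟨htA, hne⟩ := ht
      constructor
      · intro hEq
        apply hne
        rw [hFG n t htA]
        show Complex.exp (-lam * t) • (M n *ᵥ v0 ((n : ℝ) + x - t))
          = Complex.exp (-lam * t) • (M n *ᵥ g ((n : ℝ) + x - t))
        rw [show v0 ((n : ℝ) + x - t) = g ((n : ℝ) + x - t) from not_not.mp
          (fun hc => hc hEq)]
      · obtain ⟨hh1, hh2⟩ := hsub1 htA
        exact ⟨show (0 : ℝ) < (n : ℝ) + x - t by linarith,
          show (n : ℝ) + x - t < 1 by linarith⟩
    have hexp_bound : ∀ t ∈ A n, Real.exp (-lam.re * t) ≤ Real.exp |lam.re| * r ^ n := by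
      intro t ht
      rw [hrdef, ← Real.exp_nat_mul, ← Real.exp_add]
      apply Real.exp_le_exp.mpr
      have hlb := ha_lb n
      have h1 : (n : ℝ) - 1 < t := by have := ht.1; linarith
      have h2 : t < (n : ℝ) + 1 := by have := ht.2; linarith
      have h3 : lam.re * ((n : ℝ) - t) ≤ |lam.re| := by
        calc lam.re * ((n : ℝ) - t) ≤ |lam.re * ((n : ℝ) - t)| := le_abs_self _
          _ = |lam.re| * |(n : ℝ) - t| := abs_mul _ _
          _ ≤ |lam.re| * 1 := by
              refine mul_le_mul_of_nonneg_left ?_ (abs_nonneg _)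
              rw [abs_le]
              constructor <;> linarith
          _ = |lam.re| := mul_one _
      nlinarith [h3]
    have hG'bound : ∀ t ∈ A n,
        ‖G' n t‖ ≤ Real.exp |lam.re| * (‖B11 ^ n‖ * r ^ n) * ‖g ((n : ℝ) + x - t)‖ := by
      intro t ht
      show ‖Complex.exp (-lam * t) • (M n *ᵥ g ((n : ℝ) + x - t))‖ ≤ _
      rw [norm_smul, LaplaceAux.norm_exp_neg_mul]
      calc Real.exp (-lam.re * t) * ‖M n *ᵥ g ((n : ℝ) + x - t)‖
          ≤ (Real.exp |lam.re| * r ^ n) * (‖B11 ^ n‖ * ‖g ((n : ℝ) + x - t)‖) := by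
            refine mul_le_mul (hexp_bound t ht) ?_ (norm_nonneg _) (by positivity)
            exact LaplaceAux.norm_mapped_mulVec_le (B11 ^ n) _
        _ = Real.exp |lam.re| * (‖B11 ^ n‖ * r ^ n) * ‖g ((n : ℝ) + x - t)‖ := by ring
    have hG'int : IntegrableOn (G' n) (A n) := by
      refine Integrable.mono'
        (hgcompA.norm.const_mul (Real.exp |lam.re| * (‖B11 ^ n‖ * r ^ n)))
        hsmG'.aestronglyMeasurable ?_
      rw [ae_restrict_iff' (hmeasA n)]
      exact Filter.Eventually.of_forall fun t ht => hG'bound t ht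
    refine ⟨hG'int.congr haeFG'.symm, ?_⟩
    have hIeq : (∫ t in A n, ‖F t‖) = ∫ t in A n, ‖G' n t‖ :=
      integral_congr_ae (haeFG'.fun_comp norm)
    rw [hIeq]
    calc (∫ t in A n, ‖G' n t‖)
        ≤ ∫ t in A n, Real.exp |lam.re| * (‖B11 ^ n‖ * r ^ n) * ‖g ((n : ℝ) + x - t)‖ := by
          refine setIntegral_mono_on hG'int.norm
            ((hgcompA.norm).const_mul _) (hmeasA n) ?_
          exact hG'bound
      _ = Real.exp |lam.re| * (‖B11 ^ n‖ * r ^ n) * ∫ t in A n, ‖g ((n : ℝ) + x - t)‖ :=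
          integral_const_mul _ _
      _ ≤ Real.exp |lam.re| * (‖B11 ^ n‖ * r ^ n) * C0 := by
          refine mul_le_mul_of_nonneg_left ?_ (by positivity)
          calc (∫ t in A n, ‖g ((n : ℝ) + x - t)‖)
              ≤ ∫ t in Ioo ((n : ℝ) + x - 1) ((n : ℝ) + x), ‖g ((n : ℝ) + x - t)‖ := by
                refine setIntegral_mono_set hgcomp.norm
                  (Filter.Eventually.of_forall fun t => norm_nonneg _)
                  (HasSubset.Subset.eventuallyLE hsub1)
            _ = C0 := hmpr.integral_comp hemb fun s => ‖g s‖
  have hFintA : ∀ n, IntegrableOn F (A n) := fun n => (key n).1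
  have hFintU : IntegrableOn F (⋃ n, A n) := by
    refine ⟨aestronglyMeasurable_iUnion_iff.mpr fun n => (hFintA n).1, ?_⟩
    show (∫⁻ t in ⋃ n, A n, (‖F t‖₊ : ENNReal)) < ⊤
    rw [lintegral_iUnion hmeasA hdisj]
    have hterm : ∀ n : ℕ, (∫⁻ t in A n, (‖F t‖₊ : ENNReal))
        = ENNReal.ofReal (∫ t in A n, ‖F t‖) :=
      fun n => (ofReal_integral_norm_eq_lintegral_enorm (hFintA n)).symm
    calc (∑' n, ∫⁻ t in A n, (‖F t‖₊ : ENNReal))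
        = ∑' n, ENNReal.ofReal (∫ t in A n, ‖F t‖) := tsum_congr hterm
      _ ≤ ∑' n, ENNReal.ofReal (Real.exp |lam.re| * (‖B11 ^ n‖ * r ^ n) * C0) :=
          ENNReal.tsum_le_tsum fun n => ENNReal.ofReal_le_ofReal (key n).2
      _ = ENNReal.ofReal (∑' n, Real.exp |lam.re| * (‖B11 ^ n‖ * r ^ n) * C0) :=
          (ENNReal.ofReal_tsum_of_nonneg (fun n => by positivity)
            ((hsum0.mul_left _).mul_right _)).symm
      _ < ⊤ := ENNReal.ofReal_lt_top
  have hHasSum : HasSum (fun n => ∫ t in A n, F t) (∫ t in ⋃ n, A n, F t) :=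
    hasSum_integral_iUnion hmeasA hdisj hFintU
  have hIoi : (∫ t in Ioi (0 : ℝ), F t) = ∫ t in ⋃ n, A n, F t :=
    setIntegral_congr_set haeU
  have hIoo_eq : ∀ p q : ℝ, p ≤ q → ∀ f : ℝ → Fin m → ℂ,
      (∫ t in Ioo p q, f t) = ∫ t in p..q, f t := by
    intro p q hpq f
    rw [intervalIntegral.integral_of_le hpq, integral_Ioc_eq_integral_Ioo]
  have hM0 : ∀ w : Fin m → ℂ, M 0 *ᵥ w = w := by
    intro w
    show ((B11 ^ 0).map (Complex.ofReal ·)) *ᵥ w = w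
    rw [pow_zero, Matrix.map_one _ Complex.ofReal_zero Complex.ofReal_one, Matrix.one_mulVec]
  have hterm0 : (∫ t in A 0, F t)
      = ∫ s in (0 : ℝ)..x, Complex.exp (-lam * (x - s)) • v0 s := by
    set H0 : ℝ → Fin m → ℂ := fun s : ℝ => Complex.exp (-lam * (x - s)) • v0 s with hH0def
    have hcong : (∫ t in A 0, F t) = ∫ t in A 0, G 0 t :=
      setIntegral_congr_fun (hmeasA 0) (hFG 0)
    rw [hcong, hA0, hIoo_eq 0 x hx0.le]
    have h2 : ∀ t : ℝ, G 0 t = H0 (x - t) := by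
      intro t
      show Complex.exp (-lam * t) • (M 0 *ᵥ v0 (((0 : ℕ) : ℝ) + x - t))
        = Complex.exp (-lam * ((x : ℂ) - ((x - t : ℝ) : ℂ))) • v0 (x - t)
      rw [hM0]
      congr 1
      · congr 1
        push_cast
        ring
      · congr 1
        push_cast
        ring
    calc (∫ t in (0 : ℝ)..x, G 0 t)
        = ∫ t in (0 : ℝ)..x, H0 (x - t) :=
          intervalIntegral.integral_congr fun t _ => h2 t
      _ = ∫ s in (x - x)..(x - 0), H0 s := intervalIntegral.integral_comp_sub_left H0 x
      _ = ∫ s in (0 : ℝ)..x, H0 s := by rw [sub_self, sub_zero]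
  -- integrability of the basic integrand on (0,1]
  have hv0Ioc : IntegrableOn v0 (Ioc (0 : ℝ) 1) := (integrableOn_Ioc_iff_integrableOn_Ioo (hb := enorm_ne_top)).mpr hv0
  have hcont1 : Continuous fun s : ℝ => Complex.exp (-lam * (1 - s)) :=
    Complex.continuous_exp.comp
      (continuous_const.mul (continuous_const.sub Complex.continuous_ofReal))
  have hint1 : IntegrableOn (fun s : ℝ => Complex.exp (-lam * (1 - s)) • v0 s)
      (Ioc (0 : ℝ) 1) := by
    refine Integrable.mono' (hv0Ioc.norm.const_mul (Real.exp |lam.re|))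
      (hcont1.aestronglyMeasurable.smul hv0Ioc.aestronglyMeasurable) ?_
    rw [ae_restrict_iff' measurableSet_Ioc]
    refine Filter.Eventually.of_forall fun s hs => ?_
    rw [norm_smul]
    have hb : ‖Complex.exp (-lam * (1 - s))‖ ≤ Real.exp |lam.re| := by
      rw [show -lam * (1 - (s : ℂ)) = -lam * ((1 - s : ℝ) : ℂ) by push_cast; ring,
        LaplaceAux.norm_exp_neg_mul]
      apply Real.exp_le_exp.mpr
      obtain ⟨hs1, hs2⟩ := hs
      calc -lam.re * (1 - s) ≤ |(-lam.re) * (1 - s)| := le_abs_self _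
        _ = |lam.re| * |1 - s| := by rw [abs_mul, abs_neg]
        _ ≤ |lam.re| * 1 := mul_le_mul_of_nonneg_left
            (by rw [abs_le]; constructor <;> linarith) (abs_nonneg _)
        _ = |lam.re| := mul_one _
    exact mul_le_mul_of_nonneg_right hb (norm_nonneg _)
  have h4 : ∀ k : ℕ, (∫ s in (0 : ℝ)..1,
        Complex.exp (-lam * (1 - s)) • (((B11 ^ k).map (Complex.ofReal ·)) *ᵥ v0 s))
      = ((B11 ^ k).map (Complex.ofReal ·)) *ᵥ J := by
    intro k
    have hcomm : ∀ s : ℝ, Complex.exp (-lam * (1 - s)) • (((B11 ^ k).map (Complex.ofReal ·)) *ᵥ v0 s)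
        = ((B11 ^ k).map (Complex.ofReal ·)) *ᵥ (Complex.exp (-lam * (1 - s)) • v0 s) :=
      fun s => (Matrix.mulVec_smul _ _ _).symm
    simp only [hcomm]
    rw [hJdef]
    rw [intervalIntegral.integral_of_le zero_le_one, intervalIntegral.integral_of_le zero_le_one]
    exact (LinearMap.toContinuousLinearMap
      (Matrix.mulVecLin ((B11 ^ k).map (Complex.ofReal ·)))).integral_comp_comm hint1
  have htermS : ∀ n : ℕ, (∫ t in A (n + 1), F t)
      = (Complex.exp (-lam * x) * Complex.exp (-lam * n)) •
        (((B11 ^ (n + 1)).map (Complex.ofReal ·)) *ᵥ J) := by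
    intro n
    have hcong : (∫ t in A (n + 1), F t) = ∫ t in A (n + 1), G (n + 1) t :=
      setIntegral_congr_fun (hmeasA (n + 1)) (hFG (n + 1))
    rw [hcong, hAn n, hIoo_eq _ _ (by linarith)]
    set Hn : ℝ → Fin m → ℂ := fun s : ℝ =>
      Complex.exp (-lam * (((n : ℝ) + 1 + x - s : ℝ) : ℂ)) •
        (((B11 ^ (n + 1)).map (Complex.ofReal ·)) *ᵥ v0 s) with hHndef
    have h2 : ∀ t : ℝ, G (n + 1) t = Hn ((n : ℝ) + 1 + x - t) := by
      intro t
      show Complex.exp (-lam * t) •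
          (((B11 ^ (n + 1)).map (Complex.ofReal ·)) *ᵥ v0 (((n + 1 : ℕ) : ℝ) + x - t))
        = Complex.exp (-lam *
            ((((n : ℝ) + 1 + x - ((n : ℝ) + 1 + x - t) : ℝ)) : ℂ)) •
          (((B11 ^ (n + 1)).map (Complex.ofReal ·)) *ᵥ v0 ((n : ℝ) + 1 + x - t))
      rw [sub_sub_cancel]
      congr 2
      push_cast
      ring
    calc (∫ t in ((n : ℝ) + x)..((n : ℝ) + 1 + x), G (n + 1) t)
        = ∫ t in ((n : ℝ) + x)..((n : ℝ) + 1 + x), Hn ((n : ℝ) + 1 + x - t) :=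
          intervalIntegral.integral_congr fun t _ => h2 t
      _ = ∫ s in ((n : ℝ) + 1 + x - ((n : ℝ) + 1 + x))..((n : ℝ) + 1 + x - ((n : ℝ) + x)),
            Hn s := intervalIntegral.integral_comp_sub_left Hn _
      _ = ∫ s in (0 : ℝ)..1, Hn s := by
          rw [sub_self, show (n : ℝ) + 1 + x - ((n : ℝ) + x) = 1 by ring]
      _ = ∫ s in (0 : ℝ)..1, (Complex.exp (-lam * x) * Complex.exp (-lam * n)) •
            (Complex.exp (-lam * (1 - s)) •
              (((B11 ^ (n + 1)).map (Complex.ofReal ·)) *ᵥ v0 s)) := by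
          refine intervalIntegral.integral_congr fun s _ => ?_
          show Complex.exp (-lam * (((n : ℝ) + 1 + x - s : ℝ) : ℂ)) •
              (((B11 ^ (n + 1)).map (Complex.ofReal ·)) *ᵥ v0 s) = _
          rw [smul_smul, ← Complex.exp_add, ← Complex.exp_add]
          congr 2
          push_cast
          ring
      _ = (Complex.exp (-lam * x) * Complex.exp (-lam * n)) •
            ∫ s in (0 : ℝ)..1, Complex.exp (-lam * (1 - s)) •
              (((B11 ^ (n + 1)).map (Complex.ofReal ·)) *ᵥ v0 s) :=
          intervalIntegral.integral_smul _ _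
      _ = (Complex.exp (-lam * x) * Complex.exp (-lam * n)) •
            (((B11 ^ (n + 1)).map (Complex.ofReal ·)) *ᵥ J) := by rw [h4 (n + 1)]
  have hsum2 : Summable fun n : ℕ => Complex.exp (-lam * n) •
      (((B11 ^ (n + 1)).map (Complex.ofReal ·)) *ᵥ J) := hsummable.of_norm
  rw [hIoi, ← hHasSum.tsum_eq, hHasSum.summable.tsum_eq_zero_add, hterm0]
  congr 1
  calc (∑' n : ℕ, ∫ t in A (n + 1), F t)
      = ∑' n : ℕ, Complex.exp (-lam * x) • (Complex.exp (-lam * n) •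
          (((B11 ^ (n + 1)).map (Complex.ofReal ·)) *ᵥ J)) := by
        refine tsum_congr fun n => ?_
        rw [htermS n, ← smul_smul]
    _ = Complex.exp (-lam * x) • ∑' n : ℕ, Complex.exp (-lam * n) •
          (((B11 ^ (n + 1)).map (Complex.ofReal ·)) *ᵥ J) := hsum2.tsum_const_smul _
end

section
/- Let B¹¹ ∈ ℝ^{m×m}, B¹² ∈ ℝ^{m×r}, ẘ ∈ L^1(0,∞; ℝ^r), λ ∈ ℂ with Re λ > max(0, log‖B¹¹‖), and fix x ∈ (0,1). Define F(t) := ∑_{k=0}^{n−1} (B¹¹)^k B¹² ẘ(t−x−k) for t ∈ (n+x−1, n+x), n ∈ ℕ∪{0} (with the empty sum equal to 0). Then ∫₀^∞ e^{−λt} F(t) dt = e^{−λx} ∑_{k=0}^∞ e^{−λk} (B¹¹)^k B¹² ∫₀^∞ e^{−λs} ẘ(s) ds. -/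
open Matrix MeasureTheory Set
attribute [local instance] Matrix.linftyOpNormedAddCommGroup
attribute [local instance] Matrix.linftyOpNormedRing

section Aux
variable {m r : ℕ}
lemma norm_ofReal_pi (v : Fin r → ℝ) : ‖(fun i => ((v i : ℝ) : ℂ))‖ = ‖v‖ := by
  simp [Pi.norm_def, Pi.nnnorm_def]

lemma norm_map_ofReal {a b : ℕ} (M : Matrix (Fin a) (Fin b) ℝ) :
    ‖M.map (Complex.ofReal ·)‖ = ‖M‖ := by
  rw [Matrix.linfty_opNorm_def, Matrix.linfty_opNorm_def]
  simp [Matrix.map_apply]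

lemma ofReal_mulVec' {a b : ℕ} (M : Matrix (Fin a) (Fin b) ℝ) (v : Fin b → ℝ) (i : Fin a) :
    (((M *ᵥ v) i : ℝ) : ℂ) = ((M.map (Complex.ofReal ·)) *ᵥ (fun j => ((v j : ℝ) : ℂ))) i :=
  RingHom.map_mulVec Complex.ofRealHom M v i

lemma norm_pow_mul_le {a b : ℕ} (A : Matrix (Fin a) (Fin a) ℝ) (B : Matrix (Fin a) (Fin b) ℝ) :
    ∀ k : ℕ, ‖A ^ k * B‖ ≤ ‖A‖ ^ k * ‖B‖ := by
  intro k
  induction k with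
  | zero => simp
  | succ k ih =>
    calc ‖A ^ (k+1) * B‖ = ‖A * (A ^ k * B)‖ := by rw [pow_succ', Matrix.mul_assoc]
    _ ≤ ‖A‖ * ‖A ^ k * B‖ := Matrix.linfty_opNorm_mul _ _
    _ ≤ ‖A‖ * (‖A‖ ^ k * ‖B‖) := mul_le_mul_of_nonneg_left ih (norm_nonneg _)
    _ = ‖A‖ ^ (k+1) * ‖B‖ := by ring

lemma shift_setIntegrableOn {c : ℝ} {E : Type*} [NormedAddCommGroup E] (h : ℝ → E) :
    IntegrableOn (fun s => h (s + c)) (Ioi 0) volume ↔ IntegrableOn h (Ioi c) volume := by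
  have := MeasurePreserving.integrableOn_comp_preimage (e := (· + c : ℝ → ℝ))
    (measurePreserving_add_right volume c) (Homeomorph.addRight c).measurableEmbedding
    (f := h) (s := Ioi c)
  have hpre : ((· + c) : ℝ → ℝ) ⁻¹' (Ioi c) = Ioi 0 := by ext y; simp
  rw [hpre] at this; exact this

lemma shift_setIntegral {c : ℝ} {E : Type*} [NormedAddCommGroup E] [NormedSpace ℝ E]
    (h : ℝ → E) : ∫ t in Ioi c, h t = ∫ s in Ioi 0, h (s + c) := by
  have := MeasurePreserving.setIntegral_preimage_emb
    (measurePreserving_add_right volume c) (Homeomorph.addRight c).measurableEmbedding h (Ioi c)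
  have hpre : ((· + c) : ℝ → ℝ) ⁻¹' (Ioi c) = Ioi 0 := by ext y; simp
  rw [hpre] at this; exact this.symm
end Aux

set_option maxHeartbeats 1000000 in
theorem laplace_transform_boundary_feedback_part (m r : ℕ)
    (B11 : Matrix (Fin m) (Fin m) ℝ) (B12 : Matrix (Fin m) (Fin r) ℝ)
    (w0 : ℝ → Fin r → ℝ) (hw0 : MeasureTheory.IntegrableOn w0 (Set.Ioi 0))
    (lam : ℂ) (hlam : Real.log ‖B11‖ < lam.re) (hlam' : 0 < lam.re)
    (x : ℝ) (hx : x ∈ Set.Ioo (0 : ℝ) 1)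
    (F : ℝ → Fin m → ℝ)
    (hF : ∀ (t : ℝ) (n : ℕ), (n : ℝ) + x - 1 < t → t < (n : ℝ) + x →
      F t = ∑ k ∈ Finset.range n, (B11 ^ k * B12) *ᵥ w0 (t - x - (k : ℝ))) :
    (∫ t in Set.Ioi (0 : ℝ), Complex.exp (-lam * t) • (fun i => ((F t i : ℝ) : ℂ)))
      = Complex.exp (-lam * x) •
          ∑' k : ℕ, Complex.exp (-lam * k) •
            (((B11 ^ k * B12).map (Complex.ofReal ·)) *ᵥ
              (∫ s in Set.Ioi (0 : ℝ),
                Complex.exp (-lam * s) • (fun i => ((w0 s i : ℝ) : ℂ)))) := by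
  classical
  obtain ⟨hx0, hx1⟩ := hx
  set g : ℝ → Fin r → ℂ := fun s => fun i => ((w0 s i : ℝ) : ℂ) with hg_def
  set Mk : ℕ → Matrix (Fin m) (Fin r) ℂ := fun k => (B11 ^ k * B12).map (Complex.ofReal ·)
    with hMk_def
  -- basic facts
  have hnormg : ∀ s, ‖g s‖ = ‖w0 s‖ := fun s => norm_ofReal_pi (w0 s)
  have hexp_norm : ∀ t : ℝ, ‖Complex.exp (-lam * t)‖ = Real.exp (-lam.re * t) := by
    intro t
    rw [Complex.norm_exp]
    norm_num
  have hexp_le_one : ∀ t : ℝ, 0 ≤ t → ‖Complex.exp (-lam * t)‖ ≤ 1 := by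
    intro t ht
    rw [hexp_norm]
    apply Real.exp_le_one_iff.mpr
    nlinarith [hlam'.le]
  have hMk_norm : ∀ k : ℕ, ‖Mk k‖ ≤ ‖B11‖ ^ k * ‖B12‖ := by
    intro k
    rw [hMk_def]
    rw [norm_map_ofReal]
    exact norm_pow_mul_le B11 B12 k
  -- measurability of g
  have hgm : AEStronglyMeasurable g (volume.restrict (Ioi 0)) := by
    have hc : Continuous (fun (u : Fin r → ℝ) => (fun i => ((u i : ℝ) : ℂ))) :=
      continuous_pi fun i => Complex.continuous_ofReal.comp (continuous_apply i)
    exact hc.comp_aestronglyMeasurable hw0.aestronglyMeasurable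
  -- integrability of the Laplace integrand for w0
  have hI : Integrable (fun (s : ℝ) => Complex.exp (-lam * s) • g s)
      (volume.restrict (Ioi 0)) := by
    refine hw0.integrable.mono ?_ ?_
    · exact ((Complex.continuous_exp.comp (continuous_const.mul Complex.continuous_ofReal)).aestronglyMeasurable).smul hgm
    · filter_upwards [ae_restrict_mem measurableSet_Ioi] with s hs
      rw [norm_smul, hnormg]
      calc ‖Complex.exp (-lam * s)‖ * ‖w0 s‖ ≤ 1 * ‖w0 s‖ :=
        mul_le_mul_of_nonneg_right (hexp_le_one s (le_of_lt hs)) (norm_nonneg _)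
      _ = ‖w0 s‖ := one_mul _
  -- the summands and their integrals
  set h : ℕ → ℝ → (Fin m → ℂ) :=
    fun k t => Complex.exp (-lam * t) • (Mk k *ᵥ g (t - x - k)) with hh_def
  set f : ℕ → ℝ → (Fin m → ℂ) := fun k => (Ioi ((k : ℝ) + x)).indicator (h k) with hf_def
  have hshift_eq : ∀ k : ℕ, (fun s => h k (s + ((k : ℝ) + x))) =
      fun s : ℝ => Complex.exp (-lam * ((((k : ℝ) + x) : ℝ) : ℂ)) •
        (Complex.exp (-lam * s) • (Mk k *ᵥ g s)) := by
    intro k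
    funext s
    have h1 : (s + ((k : ℝ) + x)) - x - k = s := by ring
    have h2 : (-lam * ((s + ((k : ℝ) + x) : ℝ) : ℂ)) = -lam * ((((k : ℝ) + x) : ℝ) : ℂ) + -lam * s := by
      push_cast; ring
    simp only [hh_def, h1, h2, Complex.exp_add, smul_smul]
  -- integrability of the shifted integrand
  have hu_int : ∀ k : ℕ, Integrable (fun s : ℝ => Complex.exp (-lam * s) • (Mk k *ᵥ g s))
      (volume.restrict (Ioi 0)) := by
    intro k
    have heq : (fun s : ℝ => Complex.exp (-lam * s) • (Mk k *ᵥ g s)) =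
        fun s : ℝ => (Matrix.mulVecLin (Mk k)).toContinuousLinearMap
          (Complex.exp (-lam * s) • g s) := by
      funext s
      simp [_root_.map_smul]
    rw [heq]
    exact (Matrix.mulVecLin (Mk k)).toContinuousLinearMap.integrable_comp hI
  have hu_integral : ∀ k : ℕ,
      ∫ s in Ioi (0:ℝ), Complex.exp (-lam * s) • (Mk k *ᵥ g s) =
        Mk k *ᵥ (∫ s in Ioi (0:ℝ), Complex.exp (-lam * s) • g s) := by
    intro k
    have heq : (fun s : ℝ => Complex.exp (-lam * s) • (Mk k *ᵥ g s)) =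
        fun s : ℝ => (Matrix.mulVecLin (Mk k)).toContinuousLinearMap
          (Complex.exp (-lam * s) • g s) := by
      funext s; simp [_root_.map_smul]
    rw [heq, ContinuousLinearMap.integral_comp_comm _ hI]
    simp
  -- integrability of h k on (k+x, ∞)
  have hh_int : ∀ k : ℕ, IntegrableOn (h k) (Ioi ((k : ℝ) + x)) volume := by
    intro k
    rw [← shift_setIntegrableOn (c := (k : ℝ) + x) (h := h k), hshift_eq k]
    exact (hu_int k).smul (Complex.exp (-lam * ((((k : ℝ) + x) : ℝ) : ℂ)))
  have hf_int : ∀ k : ℕ, Integrable (f k) (volume.restrict (Ioi (0:ℝ))) := by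
    intro k
    exact ((integrable_indicator_iff measurableSet_Ioi).mpr (hh_int k)).restrict
  have hinter : ∀ k : ℕ, Ioi (0:ℝ) ∩ Ioi ((k : ℝ) + x) = Ioi ((k : ℝ) + x) := by
    intro k
    rw [Set.Ioi_inter_Ioi, max_eq_right]
    positivity
  have hf_integral : ∀ k : ℕ,
      (∫ t in Ioi (0:ℝ), f k t) = Complex.exp (-lam * ((((k : ℝ) + x) : ℝ) : ℂ)) •
        (Mk k *ᵥ (∫ s in Ioi (0:ℝ), Complex.exp (-lam * s) • g s)) := by
    intro k
    rw [hf_def]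
    rw [setIntegral_indicator measurableSet_Ioi, hinter k, shift_setIntegral (h k), hshift_eq k,
      integral_smul, hu_integral k]
  -- integrability of the shifted h on Ioi 0
  have hshift_int : ∀ k : ℕ, Integrable (fun s : ℝ => h k (s + ((k : ℝ) + x)))
      (volume.restrict (Ioi (0:ℝ))) := by
    intro k
    rw [hshift_eq k]
    exact (hu_int k).smul (Complex.exp (-lam * ((((k : ℝ) + x) : ℝ) : ℂ)))
  -- bound on the integral of the norm
  set Cw : ℝ := ∫ s in Ioi (0:ℝ), ‖w0 s‖ with hCw_def
  have hh_norm_int : ∀ k : ℕ, (∫ t in Ioi (0:ℝ), ‖f k t‖) ≤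
      ((‖B11‖ ^ k * ‖B12‖) * Real.exp (-lam.re * ((k : ℝ) + x))) * Cw := by
    intro k
    have h1 : (fun t => ‖f k t‖) = (Ioi ((k : ℝ) + x)).indicator (fun t => ‖h k t‖) := by
      funext t
      rw [hf_def]
      exact norm_indicator_eq_indicator_norm _ _
    rw [h1, setIntegral_indicator measurableSet_Ioi, hinter k,
      shift_setIntegral (fun t => ‖h k t‖)]
    have h2 : ∀ s ∈ Ioi (0:ℝ), ‖h k (s + ((k : ℝ) + x))‖ ≤
        ((‖B11‖ ^ k * ‖B12‖) * Real.exp (-lam.re * ((k : ℝ) + x))) * ‖w0 s‖ := by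
      intro s hs
      rw [congrFun (hshift_eq k) s, norm_smul, norm_smul, hexp_norm]
      have e2 : ‖Mk k *ᵥ g s‖ ≤ (‖B11‖ ^ k * ‖B12‖) * ‖w0 s‖ := by
        calc ‖Mk k *ᵥ g s‖ ≤ ‖Mk k‖ * ‖g s‖ := Matrix.linfty_opNorm_mulVec _ _
        _ ≤ (‖B11‖ ^ k * ‖B12‖) * ‖w0 s‖ := by
            rw [hnormg]
            exact mul_le_mul (hMk_norm k) le_rfl (norm_nonneg _)
              (by positivity)
      calc Real.exp (-lam.re * ((k : ℝ) + x)) * (‖Complex.exp (-lam * s)‖ * ‖Mk k *ᵥ g s‖)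
          ≤ Real.exp (-lam.re * ((k : ℝ) + x)) * (1 * ((‖B11‖ ^ k * ‖B12‖) * ‖w0 s‖)) := by
            apply mul_le_mul_of_nonneg_left _ (Real.exp_nonneg _)
            exact mul_le_mul (hexp_le_one s (le_of_lt hs)) e2 (norm_nonneg _) zero_le_one
        _ = ((‖B11‖ ^ k * ‖B12‖) * Real.exp (-lam.re * ((k : ℝ) + x))) * ‖w0 s‖ := by ring
    calc (∫ s in Ioi (0:ℝ), ‖h k (s + ((k : ℝ) + x))‖)
        ≤ ∫ s in Ioi (0:ℝ), ((‖B11‖ ^ k * ‖B12‖) * Real.exp (-lam.re * ((k : ℝ) + x))) * ‖w0 s‖ := by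
          apply setIntegral_mono_on ((hshift_int k).norm) (hw0.norm.const_mul _)
            measurableSet_Ioi h2
      _ = ((‖B11‖ ^ k * ‖B12‖) * Real.exp (-lam.re * ((k : ℝ) + x))) * Cw := by
          rw [hCw_def, integral_const_mul]
  -- summability of the bounds
  have hb_sum : Summable (fun k : ℕ =>
      ((‖B11‖ ^ k * ‖B12‖) * Real.exp (-lam.re * ((k : ℝ) + x))) * Cw) := by
    have hBlt : ‖B11‖ < Real.exp lam.re := by
      rcases eq_or_lt_of_le (norm_nonneg B11) with h0 | h0
      · rw [← h0]; exact Real.exp_pos _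
      · exact (Real.log_lt_iff_lt_exp h0).mp hlam
    have hρ : ‖B11‖ * Real.exp (-lam.re) < 1 := by
      have h3 := mul_lt_mul_of_pos_right hBlt (Real.exp_pos (-lam.re))
      rwa [← Real.exp_add, add_neg_cancel, Real.exp_zero] at h3
    have hgeom := summable_geometric_of_lt_one (by positivity) hρ
    have heq : (fun k : ℕ => ((‖B11‖ ^ k * ‖B12‖) * Real.exp (-lam.re * ((k : ℝ) + x))) * Cw)
        = fun k : ℕ => ((‖B12‖ * Real.exp (-lam.re * x) * Cw)) *
            (‖B11‖ * Real.exp (-lam.re)) ^ k := by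
      funext k
      have e1 : -lam.re * ((k : ℝ) + x) = (k : ℝ) * (-lam.re) + (-lam.re * x) := by ring
      rw [e1, Real.exp_add, Real.exp_nat_mul, mul_pow]
      ring
    rw [heq]
    exact hgeom.mul_left _
  have hsum : Summable (fun k : ℕ => ∫ t in Ioi (0:ℝ), ‖f k t‖) :=
    Summable.of_nonneg_of_le (fun k => integral_nonneg (fun t => norm_nonneg _))
      hh_norm_int hb_sum
  -- a.e. identification of the integrand with the series
  have hNnull : volume (⋃ n : ℕ, {(n : ℝ) + x}) = 0 :=
    measure_iUnion_null fun n => measure_singleton _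
  have hae : ∀ᵐ (t : ℝ) ∂(volume.restrict (Ioi (0:ℝ))),
      Complex.exp (-lam * t) • (fun i => ((F t i : ℝ) : ℂ)) = ∑' k, f k t := by
    filter_upwards [ae_restrict_mem measurableSet_Ioi,
      ae_restrict_of_ae (measure_eq_zero_iff_ae_notMem.mp hNnull)] with t ht htN
    have ht0 : (0:ℝ) < t := ht
    have htx : -1 < t - x := by linarith
    set z : ℤ := ⌈t - x⌉ with hz_def
    have hz0 : 0 ≤ z := by
      have h4 : (-1 : ℝ) < (z : ℝ) := lt_of_lt_of_le htx (Int.le_ceil _)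
      have h5 : (-1 : ℤ) < z := by exact_mod_cast h4
      linarith
    have hne : t - x ≠ (z : ℝ) := by
      intro he
      apply htN
      refine mem_iUnion.mpr ⟨z.toNat, ?_⟩
      have hc : ((z.toNat : ℕ) : ℝ) = (z : ℝ) := by exact_mod_cast Int.toNat_of_nonneg hz0
      simp only [mem_singleton_iff, hc]
      linarith
    have hlt : t - x < (z : ℝ) := lt_of_le_of_ne (Int.le_ceil _) hne
    have hgt : (z : ℝ) - 1 < t - x := by
      have := Int.ceil_lt_add_one (t - x)
      have h6 : ((⌈t - x⌉ : ℤ) : ℝ) < t - x + 1 := by exact_mod_cast this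
      rw [← hz_def] at h6
      linarith
    set n : ℕ := z.toNat with hn_def
    have hcast : ((n : ℕ) : ℝ) = (z : ℝ) := by exact_mod_cast Int.toNat_of_nonneg hz0
    have h1 : (n : ℝ) + x - 1 < t := by rw [hcast]; linarith
    have h2 : t < (n : ℝ) + x := by rw [hcast]; linarith
    have hFt := hF t n h1 h2
    have hLHS : (fun i => ((F t i : ℝ) : ℂ)) =
        ∑ k ∈ Finset.range n, (Mk k *ᵥ g (t - x - (k : ℝ))) := by
      funext i
      rw [hFt, Finset.sum_apply]
      rw [Complex.ofReal_sum, Finset.sum_apply]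
      apply Finset.sum_congr rfl
      intro k hk
      exact ofReal_mulVec' _ _ i
    rw [hLHS]
    rw [tsum_eq_sum (s := Finset.range n)
      (fun k hk => by
        have hk' : n ≤ k := Nat.le_of_not_lt (fun h => hk (Finset.mem_range.mpr h))
        have hk'' : (n : ℝ) ≤ (k : ℝ) := by exact_mod_cast hk'
        have hmem : t ∉ Ioi ((k : ℝ) + x) := by simp only [mem_Ioi, not_lt]; linarith
        exact Set.indicator_of_notMem hmem _)]
    rw [Finset.smul_sum]
    apply Finset.sum_congr rfl
    intro k hk
    have hk' : (k : ℝ) + 1 ≤ (n : ℝ) := by exact_mod_cast Finset.mem_range.mp hk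
    exact (Set.indicator_of_mem
      (by simp only [mem_Ioi]; linarith : t ∈ Ioi ((k : ℝ) + x)) (h k)).symm
  -- putting everything together
  have hIeq : (∫ t in Ioi (0:ℝ), Complex.exp (-lam * t) • (fun i => ((F t i : ℝ) : ℂ))) =
      ∑' k : ℕ, Complex.exp (-lam * ((((k : ℝ) + x) : ℝ) : ℂ)) •
        (Mk k *ᵥ (∫ s in Ioi (0:ℝ), Complex.exp (-lam * s) • g s)) := by
    rw [integral_congr_ae hae, ← integral_tsum_of_summable_integral_norm hf_int hsum]
    exact tsum_congr hf_integral
  rw [hIeq]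
  have hterm : ∀ k : ℕ, Complex.exp (-lam * ((((k : ℝ) + x) : ℝ) : ℂ)) •
      (Mk k *ᵥ (∫ s in Ioi (0:ℝ), Complex.exp (-lam * s) • g s)) =
      Complex.exp (-lam * x) • (Complex.exp (-lam * (k : ℕ)) •
        (Mk k *ᵥ (∫ s in Ioi (0:ℝ), Complex.exp (-lam * s) • g s))) := by
    intro k
    rw [smul_smul, ← Complex.exp_add]
    congr 2
    push_cast
    ring
  rw [tsum_congr hterm, tsum_const_smul'' (Complex.exp (-lam * x))]
end
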